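/- Let P₁, P₂ : ℝ → ℝ^{n × n} and Q₁₁, Q₁₂, Q₂₁, Q₂₂ ∈ ℝ^{n × n} satisfy [[Q₁₁, Q₁₂], [Q₂₁, Q₂₂]] = [[P₁(0), P₂(0)], [P₁(1), P₂(1)]]⁻¹ (the block matrix being invertible). Let G, F : ℝⁿ → ℝⁿ, let h : ℝ × ℝⁿ → ℝⁿ be arbitrary, write h₀(x) := h(0, x) and h_f(x) := h(1, x), and define Γ(κ, x, Ω) := Ω(h(κ, x) − Σ_{i=1}^{2} P_i(κ) Q_{i1} h₀(x) − Σ_{i=1}^{2} P_i(κ) Q_{i2} h_f(x)) + Σ_{i=1}^{2} P_i(κ) Q_{i1} G(x) + Σ_{i=1}^{2} P_i(κ) Q_{i2} F(x). Then for every Ω ∈ ℝ^{n × n} and every x ∈ ℝⁿ, Γ(0, x, Ω) = G(x) and Γ(1, x, Ω) = F(x). -/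

import Mathlib

open Matrix

/-- Condition (i) in the paper's definition of a TFC-based homotopy function
(Eqs. (15)–(18)): the TFC-based homotopy function `Γ` satisfies the boundary
conditions `Γ(0, x, Ω) = G(x)` and `Γ(1, x, Ω) = F(x)` for arbitrary `Ω`. -/
theorem tfc_homotopy_boundary_conditions
    (n : ℕ)
    (P₁ P₂ : ℝ → Matrix (Fin n) (Fin n) ℝ)
    (Q₁₁ Q₁₂ Q₂₁ Q₂₂ : Matrix (Fin n) (Fin n) ℝ)
    (hP : IsUnit (Matrix.fromBlocks (P₁ 0) (P₂ 0) (P₁ 1) (P₂ 1)))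
    (hQ : Matrix.fromBlocks Q₁₁ Q₁₂ Q₂₁ Q₂₂
        = (Matrix.fromBlocks (P₁ 0) (P₂ 0) (P₁ 1) (P₂ 1))⁻¹)
    (G F : (Fin n → ℝ) → (Fin n → ℝ))
    (h : ℝ → (Fin n → ℝ) → (Fin n → ℝ))
    (Γ : ℝ → (Fin n → ℝ) → Matrix (Fin n) (Fin n) ℝ → (Fin n → ℝ))
    (hΓ : Γ = fun κ x Ω =>
        Ω.mulVec (h κ x
            - (P₁ κ * Q₁₁ + P₂ κ * Q₂₁).mulVec (h 0 x)
            - (P₁ κ * Q₁₂ + P₂ κ * Q₂₂).mulVec (h 1 x))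
        + (P₁ κ * Q₁₁ + P₂ κ * Q₂₁).mulVec (G x)
        + (P₁ κ * Q₁₂ + P₂ κ * Q₂₂).mulVec (F x)) :
    ∀ (Ω : Matrix (Fin n) (Fin n) ℝ) (x : Fin n → ℝ),
      Γ 0 x Ω = G x ∧ Γ 1 x Ω = F x := by
  have key : Matrix.fromBlocks (P₁ 0) (P₂ 0) (P₁ 1) (P₂ 1)
      * Matrix.fromBlocks Q₁₁ Q₁₂ Q₂₁ Q₂₂ = 1 := by
    rw [hQ, Matrix.mul_nonsing_inv _ ((Matrix.isUnit_iff_isUnit_det _).mp hP)]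
  rw [Matrix.fromBlocks_multiply, ← Matrix.fromBlocks_one] at key
  have e11 : P₁ 0 * Q₁₁ + P₂ 0 * Q₂₁ = 1 := by
    have := congrArg Matrix.toBlocks₁₁ key; simpa [-Matrix.fromBlocks_one] using this
  have e12 : P₁ 0 * Q₁₂ + P₂ 0 * Q₂₂ = 0 := by
    have := congrArg Matrix.toBlocks₁₂ key; simpa [-Matrix.fromBlocks_one] using this
  have e21 : P₁ 1 * Q₁₁ + P₂ 1 * Q₂₁ = 0 := by
    have := congrArg Matrix.toBlocks₂₁ key; simpa [-Matrix.fromBlocks_one] using this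
  have e22 : P₁ 1 * Q₁₂ + P₂ 1 * Q₂₂ = 1 := by
    have := congrArg Matrix.toBlocks₂₂ key; simpa [-Matrix.fromBlocks_one] using this
  intro Ω x
  subst hΓ
  constructor
  · simp [e11, e12, Matrix.one_mulVec, Matrix.zero_mulVec, Matrix.mulVec_zero]
  · simp [e21, e22, Matrix.one_mulVec, Matrix.zero_mulVec, Matrix.mulVec_zero]
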